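/- arXiv:2403.05097 — 4 statements merged into one kernel-verified Lean document; each statement's English description precedes it below -/
import Mathlib

section
/- Let φ : C → D be a triangulated functor between skeletally small triangulated categories which is fully faithful and such that every object of D is a direct summand of φ(Y) for some Y in C. Then the induced map on Grothendieck groups G(φ) : G(C) → G(D) is injective. -/
open CategoryTheory Limits Pretriangulated

/-- The set of Euler relations (together with identifications of isomorphic objects)
in the free abelian group on the objects of a pretriangulated category. -/
def eulerSubgroup (C : Type*) [Category C] [Preadditive C] [HasZeroObject C]
    [HasShift C ℤ] [∀ n : ℤ, (shiftFunctor C n).Additive] [Pretriangulated C] :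
    AddSubgroup (FreeAbelianGroup C) :=
  AddSubgroup.closure
    ({x | ∃ T : Triangle C, (T ∈ distTriang C) ∧
        x = FreeAbelianGroup.of T.obj₂ - FreeAbelianGroup.of T.obj₁ -
              FreeAbelianGroup.of T.obj₃} ∪
     {x | ∃ U V : C, Nonempty (U ≅ V) ∧
        x = FreeAbelianGroup.of U - FreeAbelianGroup.of V})

/-- The Grothendieck group of a (skeletally small) pretriangulated category: the free
abelian group on (isomorphism classes of) objects modulo the Euler relations. -/
abbrev GGroup (C : Type*) [Category C] [Preadditive C] [HasZeroObject C]
    [HasShift C ℤ] [∀ n : ℤ, (shiftFunctor C n).Additive] [Pretriangulated C] :=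
  FreeAbelianGroup C ⧸ eulerSubgroup C

/-- The class of an object in the Grothendieck group. -/
def gclass {C : Type*} [Category C] [Preadditive C] [HasZeroObject C]
    [HasShift C ℤ] [∀ n : ℤ, (shiftFunctor C n).Additive] [Pretriangulated C]
    (X : C) : GGroup C :=
  QuotientAddGroup.mk (FreeAbelianGroup.of X)

open ZeroObject

section Aux

variable {A : Type*} [Category A] [Preadditive A] [HasZeroObject A] [HasShift A ℤ]
  [∀ n : ℤ, (shiftFunctor A n).Additive] [Pretriangulated A]

/-- There is a distinguished triangle `X ⟶ Y ⟶ P ⟶ X⟦1⟧`. -/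
def HasConeQ (X Y P : A) : Prop :=
  ∃ (f : X ⟶ Y) (g : Y ⟶ P) (h : P ⟶ X⟦(1:ℤ)⟧), Triangle.mk f g h ∈ distTriang A

lemma hasConeQ_of_distTriang (T : Triangle A) (hT : T ∈ distTriang A) :
    HasConeQ T.obj₁ T.obj₂ T.obj₃ :=
  ⟨T.mor₁, T.mor₂, T.mor₃, hT⟩

lemma HasConeQ.iso {X Y P X' Y' P' : A} (h : HasConeQ X Y P)
    (e₁ : X ≅ X') (e₂ : Y ≅ Y') (e₃ : P ≅ P') : HasConeQ X' Y' P' := by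
  obtain ⟨f, g, m, hT⟩ := h
  refine ⟨e₁.inv ≫ f ≫ e₂.hom, e₂.inv ≫ g ≫ e₃.hom,
    e₃.inv ≫ m ≫ (shiftFunctor A (1:ℤ)).map e₁.hom, ?_⟩
  refine isomorphic_distinguished _ hT _
    (Triangle.isoMk _ _ e₁.symm e₂.symm e₃.symm
      (by change (e₁.inv ≫ f ≫ e₂.hom) ≫ e₂.inv = e₁.inv ≫ f; simp)
      (by change (e₂.inv ≫ g ≫ e₃.hom) ≫ e₃.inv = e₂.inv ≫ g; simp)
      (by change (e₃.inv ≫ m ≫ (shiftFunctor A 1).map e₁.hom) ≫ (shiftFunctor A 1).map e₁.inv = e₃.inv ≫ m; simp))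

lemma hasConeQ_contractible (X : A) : HasConeQ X X 0 :=
  hasConeQ_of_distTriang _ (contractible_distinguished X)

lemma hasConeQ_shift (X : A) : HasConeQ X 0 (X⟦(1:ℤ)⟧) :=
  hasConeQ_of_distTriang _ (rot_of_distTriang _ (contractible_distinguished X))

lemma hasConeQ_zero_left (X : A) : HasConeQ 0 X X := by
  have h := hasConeQ_of_distTriang _ (inv_rot_of_distTriang _ (contractible_distinguished X))
  exact h.iso (((shiftFunctor A (-1:ℤ)).map_isZero (isZero_zero A)).isoZero) (Iso.refl _) (Iso.refl _)

noncomputable def piPairIso (f : WalkingPair → A) :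
    (∏ᶜ f) ≅ f WalkingPair.left ⊞ f WalkingPair.right :=
  HasLimit.isoOfNatIso (Discrete.natIso (fun j => by
    rcases j with ⟨_|_⟩ <;> exact Iso.refl _)) ≪≫ (biprod.isoProd _ _).symm

lemma HasConeQ.sum {X Y P X' Y' P' : A} (h : HasConeQ X Y P) (h' : HasConeQ X' Y' P') :
    HasConeQ (X ⊞ X') (Y ⊞ Y') (P ⊞ P') := by
  obtain ⟨f, g, m, hT⟩ := h
  obtain ⟨f', g', m', hT'⟩ := h'
  let T : WalkingPair → Triangle A := fun j =>
    WalkingPair.casesOn j (Triangle.mk f g m) (Triangle.mk f' g' m')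
  have hdist : productTriangle T ∈ distTriang A :=
    productTriangle_distinguished T (by rintro (_|_) <;> assumption)
  exact (hasConeQ_of_distTriang _ hdist).iso (piPairIso _) (piPairIso _) (piPairIso _)

instance preservesBinaryBiproduct_of_additive {C' : Type*} {D' : Type*} [Category C']
    [Category D'] [Preadditive C'] [Preadditive D'] {F : C' ⥤ D'} [F.Additive] {X Y : C'} :
    PreservesBinaryBiproduct X Y F :=
  preservesBinaryBiproduct_of_preservesBiproduct F X Y

lemma HasConeQ.shift1 {X Y P : A} (h : HasConeQ X Y P) :
    HasConeQ (X⟦(1:ℤ)⟧) (Y⟦(1:ℤ)⟧) (P⟦(1:ℤ)⟧) := by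
  obtain ⟨f, g, m, hT⟩ := h
  exact hasConeQ_of_distTriang _ (Triangle.shift_distinguished _ hT 1)

/-- The relation on objects: `X` and `Y` become equal in the Grothendieck group,
witnessed by two distinguished triangles with the same first two objects. -/
def grel (X Y : A) : Prop :=
  ∃ (E W₁ W₂ : A), HasConeQ W₁ W₂ (X ⊞ E) ∧ HasConeQ W₁ W₂ (Y ⊞ E)

lemma grel_of_iso {X Y : A} (e : X ≅ Y) : grel X Y := by
  refine ⟨0, 0, X, ?_, ?_⟩
  · exact (hasConeQ_zero_left X).iso (Iso.refl _) (Iso.refl _) (isoBiprodZero (isZero_zero A))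
  · exact (hasConeQ_zero_left X).iso (Iso.refl _) (Iso.refl _)
      (e ≪≫ isoBiprodZero (isZero_zero A))

lemma grel.refl (X : A) : grel X X := grel_of_iso (Iso.refl X)

lemma grel.symm {X Y : A} (h : grel X Y) : grel Y X := by
  obtain ⟨E, W₁, W₂, h₁, h₂⟩ := h
  exact ⟨E, W₁, W₂, h₂, h₁⟩

lemma grel.add {X Y X' Y' : A} (h : grel X Y) (h' : grel X' Y') :
    grel (X ⊞ X') (Y ⊞ Y') := by
  obtain ⟨E, W₁, W₂, h₁, h₂⟩ := h
  obtain ⟨E', V₁, V₂, k₁, k₂⟩ := h'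
  have χ : ∀ (B C B' C' : A), (B ⊞ C) ⊞ (B' ⊞ C') ≅ (B ⊞ B') ⊞ (C ⊞ C') := fun B C B' C' =>
    biprod.associator _ _ _ ≪≫
      biprod.mapIso (Iso.refl B)
        ((biprod.associator _ _ _).symm ≪≫
          biprod.mapIso (biprod.braiding C B') (Iso.refl C') ≪≫ biprod.associator _ _ _) ≪≫
      (biprod.associator _ _ _).symm
  exact ⟨E ⊞ E', W₁ ⊞ V₁, W₂ ⊞ V₂,
    (h₁.sum k₁).iso (Iso.refl _) (Iso.refl _) (χ _ _ _ _),
    (h₂.sum k₂).iso (Iso.refl _) (Iso.refl _) (χ _ _ _ _)⟩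

lemma grel.trans {X Y Z : A} (h : grel X Y) (h' : grel Y Z) : grel X Z := by
  obtain ⟨E, W₁, W₂, h₁, h₂⟩ := h
  obtain ⟨E', V₁, V₂, k₁, k₂⟩ := h'
  have τ : E' ⊞ (Y ⊞ E) ≅ E ⊞ (Y ⊞ E') :=
    biprod.braiding _ _ ≪≫ biprod.associator Y E E' ≪≫
      biprod.mapIso (Iso.refl Y) (biprod.braiding E E') ≪≫
      (biprod.associator Y E' E).symm ≪≫ biprod.braiding _ _
  refine ⟨E ⊞ (Y ⊞ E'), W₁ ⊞ V₁, W₂ ⊞ V₂, ?_, ?_⟩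
  · exact (h₁.sum k₁).iso (Iso.refl _) (Iso.refl _) (biprod.associator _ _ _)
  · exact (h₂.sum k₂).iso (Iso.refl _) (Iso.refl _)
      (biprod.braiding _ _ ≪≫ biprod.associator Z E' (Y ⊞ E) ≪≫
        biprod.mapIso (Iso.refl Z) τ)

lemma grel.shift {X Y : A} (h : grel X Y) : grel (X⟦(1:ℤ)⟧) (Y⟦(1:ℤ)⟧) := by
  obtain ⟨E, W₁, W₂, h₁, h₂⟩ := h
  exact ⟨E⟦(1:ℤ)⟧, W₁⟦(1:ℤ)⟧, W₂⟦(1:ℤ)⟧,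
    h₁.shift1.iso (Iso.refl _) (Iso.refl _) ((shiftFunctor A (1:ℤ)).mapBiprod X E),
    h₂.shift1.iso (Iso.refl _) (Iso.refl _) ((shiftFunctor A (1:ℤ)).mapBiprod Y E)⟩

lemma grel_shift_biprod (X : A) : grel (X⟦(1:ℤ)⟧ ⊞ X) 0 := by
  refine ⟨0, X, X, ?_, ?_⟩
  · exact ((hasConeQ_shift X).sum (hasConeQ_zero_left X)).iso
      (isoBiprodZero (isZero_zero A)).symm (isoZeroBiprod (isZero_zero A)).symm
      (isoBiprodZero (isZero_zero A))
  · exact (hasConeQ_contractible X).iso (Iso.refl _) (Iso.refl _)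
      (isoBiprodZero (isZero_zero A))

lemma grel_obj₂ (T : Triangle A) (hT : T ∈ distTriang A) :
    grel T.obj₂ (T.obj₁ ⊞ T.obj₃) := by
  refine ⟨0, T.obj₃⟦(-1:ℤ)⟧, T.obj₁, ?_, ?_⟩
  · exact (hasConeQ_of_distTriang _ (inv_rot_of_distTriang _ hT)).iso
      (Iso.refl _) (Iso.refl _) (isoBiprodZero (isZero_zero A))
  · refine ((hasConeQ_shift (T.obj₃⟦(-1:ℤ)⟧)).sum (hasConeQ_zero_left T.obj₁)).iso
      (isoBiprodZero (isZero_zero A)).symm (isoZeroBiprod (isZero_zero A)).symm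
      ?_
    exact (biprod.mapIso (shiftNegShift T.obj₃ 1) (Iso.refl _) ≪≫ biprod.braiding _ _
      ≪≫ (isoBiprodZero (isZero_zero A)))

variable (A) in
/-- The setoid of the relation `grel`. -/
def gsetoid : Setoid A where
  r := grel
  iseqv := ⟨grel.refl, fun h => h.symm, fun h h' => h.trans h'⟩

variable (A) in
/-- The quotient of objects by `grel`, an auxiliary abelian group. -/
def GW := Quotient (gsetoid A)

/-- The class of an object in `GW`. -/
def GW.mk (X : A) : GW A := Quotient.mk (gsetoid A) X

noncomputable instance : Zero (GW A) := ⟨GW.mk 0⟩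
noncomputable instance : Add (GW A) :=
  ⟨Quotient.map₂ (· ⊞ ·) (fun _ _ h _ _ h' => h.add h')⟩
noncomputable instance : Neg (GW A) :=
  ⟨Quotient.map (fun X => X⟦(1:ℤ)⟧) (fun _ _ h => h.shift)⟩

noncomputable instance : AddCommGroup (GW A) where
  add := (· + ·)
  zero := 0
  neg := (- ·)
  nsmul := nsmulRec
  zsmul := zsmulRec
  add_assoc := by
    rintro ⟨a⟩ ⟨b⟩ ⟨c⟩
    exact Quotient.sound (grel_of_iso (biprod.associator a b c))
  zero_add := by
    rintro ⟨a⟩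
    exact Quotient.sound (grel_of_iso (isoZeroBiprod (isZero_zero A)).symm)
  add_zero := by
    rintro ⟨a⟩
    exact Quotient.sound (grel_of_iso (isoBiprodZero (isZero_zero A)).symm)
  add_comm := by
    rintro ⟨a⟩ ⟨b⟩
    exact Quotient.sound (grel_of_iso (biprod.braiding a b))
  neg_add_cancel := by
    rintro ⟨a⟩
    exact Quotient.sound (grel_shift_biprod a)

lemma GW.mk_add (X Y : A) : GW.mk X + GW.mk Y = GW.mk (X ⊞ Y) := rfl

lemma GW.zero_def : (0 : GW A) = GW.mk 0 := rfl

lemma GW.exact {X Y : A} (h : GW.mk X = GW.mk Y) : grel X Y := Quotient.exact h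

variable (A) in
/-- The canonical hom from the free abelian group to `GW`. -/
noncomputable def toGW : FreeAbelianGroup A →+ GW A :=
  FreeAbelianGroup.lift GW.mk

lemma toGW_of (X : A) : toGW A (FreeAbelianGroup.of X) = GW.mk X :=
  FreeAbelianGroup.lift_apply_of _ _

lemma euler_le_ker : eulerSubgroup A ≤ (toGW A).ker := by
  rw [eulerSubgroup]
  rw [AddSubgroup.closure_le]
  rintro x (⟨T, hT, rfl⟩ | ⟨U, V, ⟨e⟩, rfl⟩) <;>
    simp only [SetLike.mem_coe, AddMonoidHom.mem_ker, map_sub, toGW_of]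
  · rw [sub_sub, sub_eq_zero, GW.mk_add]
    exact Quotient.sound (grel_obj₂ T hT)
  · rw [sub_eq_zero]
    exact Quotient.sound (grel_of_iso e)

lemma grel_of_gclass_eq {X Y : A} (h : gclass X = gclass Y) : grel X Y := by
  let f : GGroup A →+ GW A :=
    QuotientAddGroup.lift (eulerSubgroup A) (toGW A) euler_le_ker
  have hX : f (gclass X) = GW.mk X := toGW_of X
  have hY : f (gclass Y) = GW.mk Y := toGW_of Y
  exact GW.exact (hX ▸ hY ▸ congrArg f h)

lemma gclass_of_iso {U V : A} (e : U ≅ V) : gclass U = gclass V := by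
  rw [gclass, gclass, QuotientAddGroup.eq_iff_sub_mem]
  exact AddSubgroup.subset_closure (Or.inr ⟨U, V, ⟨e⟩, rfl⟩)

lemma gclass_triangle (T : Triangle A) (hT : T ∈ distTriang A) :
    gclass T.obj₂ = gclass T.obj₁ + gclass T.obj₃ := by
  have h : gclass T.obj₁ + gclass T.obj₃ =
      QuotientAddGroup.mk (FreeAbelianGroup.of T.obj₁ + FreeAbelianGroup.of T.obj₃) := rfl
  rw [h, gclass, QuotientAddGroup.eq_iff_sub_mem, sub_add_eq_sub_sub]
  exact AddSubgroup.subset_closure (Or.inl ⟨T, hT, rfl⟩)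

lemma gclass_zero : gclass (0 : A) = 0 := by
  have h := gclass_triangle _ (contractible_distinguished (0 : A))
  exact (add_eq_left.mp h.symm)

lemma gclass_biprod (X Y : A) : gclass (X ⊞ Y) = gclass X + gclass Y :=
  gclass_triangle _ (binaryBiproductTriangle_distinguished X Y)

lemma gclass_shift (X : A) : gclass (X⟦(1:ℤ)⟧) = -gclass X := by
  have h := gclass_triangle _ (rot_of_distTriang _ (contractible_distinguished X))
  change gclass (0:A) = gclass X + gclass (X⟦(1:ℤ)⟧) at h
  rw [gclass_zero] at h
  exact (neg_eq_of_add_eq_zero_right h.symm).symm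

lemma exists_gclass (x : GGroup A) : ∃ X : A, x = gclass X := by
  obtain ⟨y, rfl⟩ := QuotientAddGroup.mk_surjective x
  induction y using FreeAbelianGroup.induction_on with
  | zero => exact ⟨0, gclass_zero.symm⟩
  | of x => exact ⟨x, rfl⟩
  | neg x h =>
      obtain ⟨X, hX⟩ := h
      refine ⟨X⟦(1:ℤ)⟧, ?_⟩
      have : (QuotientAddGroup.mk (-FreeAbelianGroup.of x) : GGroup A) =
        -QuotientAddGroup.mk (FreeAbelianGroup.of x) := rfl
      rw [this, hX, gclass_shift]
  | add a b ha hb =>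
      obtain ⟨X, hX⟩ := ha
      obtain ⟨Y, hY⟩ := hb
      refine ⟨X ⊞ Y, ?_⟩
      have : (QuotientAddGroup.mk (a + b) : GGroup A) =
        QuotientAddGroup.mk a + QuotientAddGroup.mk b := rfl
      rw [this, hX, hY, gclass_biprod]

lemma exists_biprod_of_retract {Y Q : A} (s : Y ⟶ Q) (r : Q ⟶ Y) (hsr : s ≫ r = 𝟙 Y) :
    ∃ Z : A, Nonempty (Q ≅ Y ⊞ Z) := by
  obtain ⟨Z, g, m, hT⟩ := distinguished_cocone_triangle s
  have h0 : (Triangle.mk s g m).mor₃ = 0 := by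
    have h1 := comp_distTriang_mor_zero₃₁ _ hT
    change m ≫ s⟦(1:ℤ)⟧' = 0 at h1
    calc m = m ≫ (s ≫ r)⟦(1:ℤ)⟧' := by rw [hsr]; simp
    _ = (m ≫ s⟦(1:ℤ)⟧') ≫ r⟦(1:ℤ)⟧' := by rw [Functor.map_comp]; simp
    _ = 0 := by rw [h1]; simp
  obtain ⟨e, -, -⟩ := exists_iso_binaryBiproduct_of_distTriang _ hT h0
  exact ⟨Z, ⟨e⟩⟩

end Aux

/-- If `φ : C ⥤ D` is a triangulated functor which is fully faithful and such that every
object of `D` is (isomorphic to) a direct summand of `φ Y` for some `Y : C`, then the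
induced map on Grothendieck groups is injective. -/
theorem grothendieck_map_injective_of_equivalence_upto_summands
    {C D : Type*} [Category C] [Preadditive C] [HasZeroObject C] [HasShift C ℤ]
    [∀ n : ℤ, (shiftFunctor C n).Additive] [Pretriangulated C]
    [Category D] [Preadditive D] [HasZeroObject D] [HasShift D ℤ]
    [∀ n : ℤ, (shiftFunctor D n).Additive] [Pretriangulated D]
    (φ : C ⥤ D) [φ.Additive] [φ.CommShift ℤ] [φ.IsTriangulated]
    [φ.Full] [φ.Faithful]
    (hdense : ∀ Y : D, ∃ (X : C) (s : Y ⟶ φ.obj X) (r : φ.obj X ⟶ Y), s ≫ r = 𝟙 Y)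
    (g : GGroup C →+ GGroup D)
    (hg : ∀ X : C, g (gclass X) = gclass (φ.obj X)) :
    Function.Injective g := by
  rw [injective_iff_map_eq_zero]
  intro x hx
  obtain ⟨X, rfl⟩ := exists_gclass x
  rw [hg X] at hx
  have h1 : gclass (φ.obj X) = gclass (0 : D) := by rw [hx, gclass_zero]
  obtain ⟨E, W₁, W₂, c₁, c₂⟩ := grel_of_gclass_eq h1
  replace c₂ := c₂.iso (Iso.refl _) (Iso.refl _) (isoZeroBiprod (isZero_zero D)).symm
  -- step 1 : make the first object a `φ`-image
  obtain ⟨A₀, s, r, hsr⟩ := hdense W₁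
  obtain ⟨W₁c, ⟨e₁⟩⟩ := exists_biprod_of_retract s r hsr
  have k := hasConeQ_contractible W₁c
  replace c₁ := (c₁.sum k).iso e₁.symm (Iso.refl _) (isoBiprodZero (isZero_zero D)).symm
  replace c₂ := (c₂.sum k).iso e₁.symm (Iso.refl _) (isoBiprodZero (isZero_zero D)).symm
  -- step 2 : make the second object a `φ`-image
  obtain ⟨B₀, s', r', hsr'⟩ := hdense (W₂ ⊞ W₁c)
  obtain ⟨Vc, ⟨e₂⟩⟩ := exists_biprod_of_retract s' r' hsr'
  have k' := hasConeQ_zero_left Vc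
  replace c₁ := (c₁.sum k').iso (isoBiprodZero (isZero_zero D)).symm e₂.symm
    (biprod.associator _ _ _)
  replace c₂ := (c₂.sum k').iso (isoBiprodZero (isZero_zero D)).symm e₂.symm (Iso.refl _)
  -- now pull everything back to C
  obtain ⟨f₁, g₁, h₁, hT₁⟩ := c₁
  obtain ⟨f₂, g₂, h₂, hT₂⟩ := c₂
  obtain ⟨Q₁, u₁, v₁, hQ₁⟩ := distinguished_cocone_triangle (φ.preimage f₁)
  obtain ⟨Q₂, u₂, v₂, hQ₂⟩ := distinguished_cocone_triangle (φ.preimage f₂)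
  have m₁ := φ.map_distinguished _ hQ₁
  have m₂ := φ.map_distinguished _ hQ₂
  have e₃ : (φ.obj X ⊞ (E ⊞ Vc)) ≅ φ.obj Q₁ :=
    Triangle.π₃.mapIso (isoTriangleOfIso₁₂ _ _ hT₁ m₁ (Iso.refl _) (Iso.refl _)
      (by change f₁ ≫ 𝟙 _ = 𝟙 _ ≫ φ.map (φ.preimage f₁); simp))
  have e₄ : (E ⊞ Vc) ≅ φ.obj Q₂ :=
    Triangle.π₃.mapIso (isoTriangleOfIso₁₂ _ _ hT₂ m₂ (Iso.refl _) (Iso.refl _)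
      (by change f₂ ≫ 𝟙 _ = 𝟙 _ ≫ φ.map (φ.preimage f₂); simp))
  have e₅ : X ⊞ Q₂ ≅ Q₁ := φ.preimageIso
    (φ.mapBiprod X Q₂ ≪≫ biprod.mapIso (Iso.refl _) e₄.symm ≪≫ e₃)
  have r₁ : gclass B₀ = gclass A₀ + gclass Q₁ := gclass_triangle _ hQ₁
  have r₂ : gclass B₀ = gclass A₀ + gclass Q₂ := gclass_triangle _ hQ₂
  have r₃ : gclass Q₁ = gclass X + gclass Q₂ := by
    rw [← gclass_biprod]
    exact (gclass_of_iso e₅).symm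
  have r₄ : gclass Q₁ = gclass Q₂ := add_left_cancel (r₁.symm.trans r₂)
  have r₅ : gclass X + gclass Q₂ = gclass Q₂ := by rw [← r₃, r₄]
  simpa using add_eq_right.mp r₅
end

section
/- Let φ : C → D be a fully faithful triangulated functor such that every object of D is a direct summand of an object in the image of φ, and assume D satisfies weak cancellation (U ⊕ V ≅ U ⊕ W implies V ≅ W). If V ∈ D satisfies [V] ∈ image(G(φ)) in the Grothendieck group G(D), then there exists W ∈ C with φ(W) ≅ V. -/
open CategoryTheory Limits Pretriangulated

/-- Weak cancellation: `U ⊞ V ≅ U ⊞ W` implies `V ≅ W`. -/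
def WeakCancellation (D : Type*) [Category D] [Preadditive D] [HasBinaryBiproducts D] : Prop :=
  ∀ U V W : D, Nonempty (U ⊞ V ≅ U ⊞ W) → Nonempty (V ≅ W)


open ZeroObject

namespace GThomason

variable {A : Type*} [Category A] [Preadditive A] [HasZeroObject A] [HasShift A ℤ]
  [∀ n : ℤ, (shiftFunctor A n).Additive] [Pretriangulated A]



lemma gclass_eq_of_iso {X Y : A} (e : X ≅ Y) : gclass X = gclass Y := by
  unfold gclass
  rw [QuotientAddGroup.eq]
  have h : (FreeAbelianGroup.of X - FreeAbelianGroup.of Y) ∈ eulerSubgroup A :=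
    AddSubgroup.subset_closure (Or.inr ⟨X, Y, ⟨e⟩, rfl⟩)
  have := (eulerSubgroup A).neg_mem h
  convert this using 1
  abel

lemma gclass_triangle (T : Triangle A) (hT : T ∈ distTriang A) :
    gclass T.obj₂ = gclass T.obj₁ + gclass T.obj₃ := by
  unfold gclass
  rw [show (QuotientAddGroup.mk (FreeAbelianGroup.of T.obj₁) : GGroup A) +
      QuotientAddGroup.mk (FreeAbelianGroup.of T.obj₃) =
      QuotientAddGroup.mk (FreeAbelianGroup.of T.obj₁ + FreeAbelianGroup.of T.obj₃) from rfl,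
    QuotientAddGroup.eq]
  have h : (FreeAbelianGroup.of T.obj₂ - FreeAbelianGroup.of T.obj₁ -
      FreeAbelianGroup.of T.obj₃) ∈ eulerSubgroup A :=
    AddSubgroup.subset_closure (Or.inl ⟨T, hT, rfl⟩)
  have := (eulerSubgroup A).neg_mem h
  convert this using 1
  abel

lemma gclass_zero : gclass (0 : A) = 0 := by
  have := gclass_triangle _ (contractible_distinguished (0 : A))
  dsimp [contractibleTriangle] at this
  -- this : gclass 0 = gclass 0 + gclass 0
  have h := left_eq_add.mp this
  exact h

lemma gclass_of_isZero {Z : A} (h : IsZero Z) : gclass Z = 0 :=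
  (gclass_eq_of_iso (h.isoZero)).trans gclass_zero

lemma gclass_shift (X : A) : gclass (X⟦(1:ℤ)⟧) = -gclass X := by
  have := gclass_triangle _ (rot_of_distTriang _ (contractible_distinguished X))
  dsimp [contractibleTriangle, Triangle.rotate, Triangle.mk] at this
  rw [gclass_zero] at this
  rw [eq_neg_iff_add_eq_zero, add_comm, this]

lemma gclass_biprod (X Y : A) : gclass (X ⊞ Y) = gclass X + gclass Y := by
  have := gclass_triangle _ (binaryBiproductTriangle_distinguished X Y)
  exact this

lemma gclass_surjective (x : GGroup A) : ∃ B : A, x = gclass B := by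
  obtain ⟨y, rfl⟩ := QuotientAddGroup.mk_surjective x
  induction y using FreeAbelianGroup.induction_on with
  | zero => exact ⟨0, gclass_zero.symm⟩
  | of X => exact ⟨X, rfl⟩
  | neg X _ =>
      refine ⟨X⟦(1:ℤ)⟧, ?_⟩
      rw [gclass_shift]
      rfl
  | add y z hy hz =>
      obtain ⟨B₁, h₁⟩ := hy
      obtain ⟨B₂, h₂⟩ := hz
      refine ⟨B₁ ⊞ B₂, ?_⟩
      rw [gclass_biprod, ← h₁, ← h₂]
      rfl




/-- The product over `Fin 2` is a binary biproduct. -/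
noncomputable def piFinTwoIso (g : Fin 2 → A) : (∏ᶜ g) ≅ g 0 ⊞ g 1 where
  hom := biprod.lift (Pi.π g 0) (Pi.π g 1)
  inv := Pi.lift (fun j => match j with
    | ⟨0, _⟩ => (biprod.fst : g 0 ⊞ g 1 ⟶ g 0)
    | ⟨1, _⟩ => (biprod.snd : g 0 ⊞ g 1 ⟶ g 1))
  hom_inv_id := by
    apply Pi.hom_ext
    intro j
    match j with
    | ⟨0, _⟩ => simp
    | ⟨1, _⟩ => simp
  inv_hom_id := by
    apply biprod.hom_ext <;> simp

lemma exists_sum_triangle (T₁ T₂ : Triangle A) (h₁ : T₁ ∈ distTriang A)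
    (h₂ : T₂ ∈ distTriang A) :
    ∃ T ∈ distTriang A, Nonempty (T.obj₁ ≅ T₁.obj₁ ⊞ T₂.obj₁) ∧
      Nonempty (T.obj₂ ≅ T₁.obj₂ ⊞ T₂.obj₂) ∧ Nonempty (T.obj₃ ≅ T₁.obj₃ ⊞ T₂.obj₃) := by
  let f : Fin 2 → Triangle A := ![T₁, T₂]
  have hdist := productTriangle_distinguished f (by
    intro j
    match j with
    | ⟨0, _⟩ => exact h₁
    | ⟨1, _⟩ => exact h₂)
  exact ⟨productTriangle f, hdist, ⟨piFinTwoIso _⟩, ⟨piFinTwoIso _⟩, ⟨piFinTwoIso _⟩⟩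




/-- `(X ⊞ Y) ⊞ Z ≅ (X ⊞ Z) ⊞ Y`. -/
noncomputable def shuffle (X Y Z : A) : (X ⊞ Y) ⊞ Z ≅ (X ⊞ Z) ⊞ Y :=
  biprod.associator X Y Z ≪≫ biprod.mapIso (Iso.refl X) (biprod.braiding Y Z) ≪≫
    (biprod.associator X Z Y).symm

attribute [local instance] preservesBinaryBiproducts_of_preservesBiproducts

/-- Thomason's relation. -/
def drel (M N : A) : Prop :=
  ∃ (T₁ T₂ : Triangle A) (Y : A), (T₁ ∈ distTriang A) ∧ (T₂ ∈ distTriang A) ∧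
    Nonempty (T₁.obj₁ ≅ T₂.obj₁) ∧ Nonempty (T₁.obj₂ ≅ Y ⊞ M) ∧
    Nonempty (T₂.obj₂ ≅ Y ⊞ N) ∧ Nonempty (T₁.obj₃ ≅ T₂.obj₃)

lemma drel_refl (M : A) : drel M M :=
  ⟨contractibleTriangle ((0 : A) ⊞ M), contractibleTriangle ((0 : A) ⊞ M), 0,
    contractible_distinguished _, contractible_distinguished _,
    ⟨Iso.refl _⟩, ⟨Iso.refl _⟩, ⟨Iso.refl _⟩, ⟨Iso.refl _⟩⟩

lemma drel_symm {M N : A} (h : drel M N) : drel N M := by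
  obtain ⟨T₁, T₂, Y, d₁, d₂, ⟨e₁⟩, ⟨e₂⟩, ⟨e₃⟩, ⟨e₄⟩⟩ := h
  exact ⟨T₂, T₁, Y, d₂, d₁, ⟨e₁.symm⟩, ⟨e₃⟩, ⟨e₂⟩, ⟨e₄.symm⟩⟩

lemma drel_of_iso {M N : A} (e : M ≅ N) : drel M N :=
  ⟨contractibleTriangle ((0 : A) ⊞ M), contractibleTriangle ((0 : A) ⊞ M), 0,
    contractible_distinguished _, contractible_distinguished _,
    ⟨Iso.refl _⟩, ⟨Iso.refl _⟩, ⟨biprod.mapIso (Iso.refl _) e⟩, ⟨Iso.refl _⟩⟩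

lemma drel_trans {M N P : A} (h : drel M N) (h' : drel N P) : drel M P := by
  obtain ⟨T₁, T₂, Y, d₁, d₂, ⟨e₁⟩, ⟨e₂⟩, ⟨e₃⟩, ⟨e₄⟩⟩ := h
  obtain ⟨S₁, S₂, Y', f₁, f₂, ⟨g₁⟩, ⟨g₂⟩, ⟨g₃⟩, ⟨g₄⟩⟩ := h'
  obtain ⟨U₁, hU₁, ⟨u₁⟩, ⟨u₂⟩, ⟨u₃⟩⟩ := exists_sum_triangle T₁ S₁ d₁ f₁
  obtain ⟨U₂, hU₂, ⟨v₁⟩, ⟨v₂⟩, ⟨v₃⟩⟩ := exists_sum_triangle T₂ S₂ d₂ f₂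
  refine ⟨U₁, U₂, (Y ⊞ Y') ⊞ N, hU₁, hU₂, ⟨u₁ ≪≫ biprod.mapIso e₁ g₁ ≪≫ v₁.symm⟩,
    ⟨u₂ ≪≫ biprod.mapIso e₂ g₂ ≪≫ ?_⟩, ⟨v₂ ≪≫ biprod.mapIso e₃ g₃ ≪≫ ?_⟩,
    ⟨u₃ ≪≫ biprod.mapIso e₄ g₄ ≪≫ v₃.symm⟩⟩
  · -- (Y ⊞ M) ⊞ (Y' ⊞ N) ≅ ((Y ⊞ Y') ⊞ N) ⊞ M
    calc (Y ⊞ M) ⊞ (Y' ⊞ N) ≅ (Y ⊞ (Y' ⊞ N)) ⊞ M := shuffle _ _ _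
    _ ≅ ((Y ⊞ Y') ⊞ N) ⊞ M := biprod.mapIso (biprod.associator _ _ _).symm (Iso.refl _)
  · -- (Y ⊞ N) ⊞ (Y' ⊞ P) ≅ ((Y ⊞ Y') ⊞ N) ⊞ P
    calc (Y ⊞ N) ⊞ (Y' ⊞ P) ≅ ((Y ⊞ N) ⊞ Y') ⊞ P := (biprod.associator _ _ _).symm
    _ ≅ ((Y ⊞ Y') ⊞ N) ⊞ P := biprod.mapIso (shuffle _ _ _) (Iso.refl _)

lemma drel_add_left {M N : A} (P : A) (h : drel M N) : drel (P ⊞ M) (P ⊞ N) := by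
  obtain ⟨T₁, T₂, Y, d₁, d₂, ⟨e₁⟩, ⟨e₂⟩, ⟨e₃⟩, ⟨e₄⟩⟩ := h
  obtain ⟨U₁, hU₁, ⟨u₁⟩, ⟨u₂⟩, ⟨u₃⟩⟩ :=
    exists_sum_triangle T₁ (contractibleTriangle P) d₁ (contractible_distinguished P)
  obtain ⟨U₂, hU₂, ⟨v₁⟩, ⟨v₂⟩, ⟨v₃⟩⟩ :=
    exists_sum_triangle T₂ (contractibleTriangle P) d₂ (contractible_distinguished P)
  refine ⟨U₁, U₂, Y, hU₁, hU₂, ⟨u₁ ≪≫ biprod.mapIso e₁ (Iso.refl P) ≪≫ v₁.symm⟩,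
    ⟨u₂ ≪≫ biprod.mapIso e₂ (Iso.refl P) ≪≫ ?_⟩,
    ⟨v₂ ≪≫ biprod.mapIso e₃ (Iso.refl P) ≪≫ ?_⟩,
    ⟨u₃ ≪≫ biprod.mapIso e₄ (Iso.refl _) ≪≫ v₃.symm⟩⟩
  · calc (Y ⊞ M) ⊞ P ≅ (Y ⊞ P) ⊞ M := shuffle _ _ _
    _ ≅ Y ⊞ (P ⊞ M) := biprod.associator _ _ _
  · calc (Y ⊞ N) ⊞ P ≅ (Y ⊞ P) ⊞ N := shuffle _ _ _
    _ ≅ Y ⊞ (P ⊞ N) := biprod.associator _ _ _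

lemma drel_add {M N M' N' : A} (h : drel M N) (h' : drel M' N') :
    drel (M ⊞ M') (N ⊞ N') := by
  have s₁ : drel (M ⊞ M') (M ⊞ N') := drel_add_left M h'
  have s₂ : drel (M ⊞ N') (N' ⊞ M) := drel_of_iso (biprod.braiding _ _)
  have s₃ : drel (N' ⊞ M) (N' ⊞ N) := drel_add_left N' h
  have s₄ : drel (N' ⊞ N) (N ⊞ N') := drel_of_iso (biprod.braiding _ _)
  exact drel_trans (drel_trans (drel_trans s₁ s₂) s₃) s₄

lemma drel_shift {M N : A} (h : drel M N) : drel (M⟦(1:ℤ)⟧) (N⟦(1:ℤ)⟧) := by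
  obtain ⟨T₁, T₂, Y, d₁, d₂, ⟨e₁⟩, ⟨e₂⟩, ⟨e₃⟩, ⟨e₄⟩⟩ := h
  refine ⟨(CategoryTheory.shiftFunctor (Triangle A) (1:ℤ)).obj T₁,
    (CategoryTheory.shiftFunctor (Triangle A) (1:ℤ)).obj T₂, Y⟦(1:ℤ)⟧,
    Triangle.shift_distinguished T₁ d₁ 1, Triangle.shift_distinguished T₂ d₂ 1,
    ⟨(shiftFunctor A (1:ℤ)).mapIso e₁⟩,
    ⟨(shiftFunctor A (1:ℤ)).mapIso e₂ ≪≫ (shiftFunctor A (1:ℤ)).mapBiprod Y M⟩,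
    ⟨(shiftFunctor A (1:ℤ)).mapIso e₃ ≪≫ (shiftFunctor A (1:ℤ)).mapBiprod Y N⟩,
    ⟨(shiftFunctor A (1:ℤ)).mapIso e₄⟩⟩

lemma drel_triangle {T : Triangle A} (hT : T ∈ distTriang A) :
    drel T.obj₂ (T.obj₁ ⊞ T.obj₃) := by
  refine ⟨T, binaryBiproductTriangle T.obj₁ T.obj₃, 0, hT,
    binaryBiproductTriangle_distinguished _ _, ⟨Iso.refl _⟩,
    ⟨isoZeroBiprod (isZero_zero A)⟩,
    ⟨isoZeroBiprod (isZero_zero A)⟩, ⟨Iso.refl _⟩⟩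

lemma drel_neg_add (M : A) : drel ((M⟦(1:ℤ)⟧) ⊞ M) (0 : A) := by
  refine ⟨binaryBiproductTriangle M (M⟦(1:ℤ)⟧),
    (contractibleTriangle M).rotate, 0,
    binaryBiproductTriangle_distinguished _ _,
    rot_of_distTriang _ (contractible_distinguished M),
    ⟨Iso.refl _⟩,
    ⟨biprod.braiding _ _ ≪≫ isoZeroBiprod (isZero_zero A)⟩,
    ⟨isoZeroBiprod (isZero_zero A)⟩,
    ⟨Iso.refl _⟩⟩


def drelSetoid (A : Type*) [Category A] [Preadditive A] [HasZeroObject A] [HasShift A ℤ]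
    [∀ n : ℤ, (shiftFunctor A n).Additive] [Pretriangulated A] : Setoid A :=
  ⟨drel, fun _ => drel_refl _, drel_symm, drel_trans⟩

attribute [local instance] drelSetoid

/-- Objects of `A` modulo Thomason's relation. -/
def GObj (A : Type*) [Category A] [Preadditive A] [HasZeroObject A] [HasShift A ℤ]
    [∀ n : ℤ, (shiftFunctor A n).Additive] [Pretriangulated A] : Type _ :=
  Quotient (drelSetoid A)

/-- Class of an object in `GObj`. -/
def gobj (X : A) : GObj A := Quotient.mk (drelSetoid A) X

lemma gobj_eq_iff {X Y : A} : gobj X = gobj Y ↔ drel X Y :=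
  ⟨fun h => Quotient.exact h, fun h => Quotient.sound (by exact h)⟩

noncomputable instance : Zero (GObj A) := ⟨gobj (0 : A)⟩
noncomputable instance : Add (GObj A) :=
  ⟨Quotient.map₂ (fun X Y => X ⊞ Y) (fun _ _ h _ _ h' => drel_add h h')⟩
noncomputable instance : Neg (GObj A) :=
  ⟨Quotient.map (fun X => X⟦(1:ℤ)⟧) (fun _ _ h => drel_shift h)⟩

noncomputable instance : AddCommGroup (GObj A) where
  nsmul := nsmulRec
  zsmul := zsmulRec
  add_assoc a b c := by
    induction a using Quotient.ind
    induction b using Quotient.ind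
    induction c using Quotient.ind
    exact Quotient.sound (drel_of_iso (biprod.associator _ _ _))
  zero_add a := by
    induction a using Quotient.ind
    exact Quotient.sound (drel_of_iso (isoZeroBiprod (isZero_zero A)).symm)
  add_zero a := by
    induction a using Quotient.ind
    exact Quotient.sound (drel_of_iso (isoBiprodZero (isZero_zero A)).symm)
  add_comm a b := by
    induction a using Quotient.ind
    induction b using Quotient.ind
    exact Quotient.sound (drel_of_iso (biprod.braiding _ _))
  neg_add_cancel a := by
    induction a using Quotient.ind
    exact Quotient.sound (drel_neg_add _)

lemma gobj_add (X Y : A) : gobj (X ⊞ Y) = gobj X + gobj Y := rfl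

/-- The homomorphism from the Grothendieck group to `GObj`. -/
noncomputable def toGObj (A : Type*) [Category A] [Preadditive A] [HasZeroObject A]
    [HasShift A ℤ] [∀ n : ℤ, (shiftFunctor A n).Additive] [Pretriangulated A] :
    GGroup A →+ GObj A :=
  QuotientAddGroup.lift (eulerSubgroup A) (FreeAbelianGroup.lift (fun X : A => gobj X)) (by
    intro x hx
    refine (AddSubgroup.closure_le _).mpr ?_ hx
    rintro y (⟨T, hT, rfl⟩ | ⟨U, W, ⟨e⟩, rfl⟩) <;>
      rw [SetLike.mem_coe, AddMonoidHom.mem_ker]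
    · rw [map_sub, map_sub, FreeAbelianGroup.lift_apply_of, FreeAbelianGroup.lift_apply_of,
        FreeAbelianGroup.lift_apply_of, sub_sub, sub_eq_zero]
      rw [show gobj T.obj₁ + gobj T.obj₃ = gobj (T.obj₁ ⊞ T.obj₃) from rfl]
      exact Quotient.sound (drel_triangle hT)
    · rw [map_sub, FreeAbelianGroup.lift_apply_of, FreeAbelianGroup.lift_apply_of, sub_eq_zero]
      exact Quotient.sound (drel_of_iso e))

lemma toGObj_gclass (X : A) : toGObj A (gclass X) = gobj X := by
  unfold toGObj gclass
  rw [QuotientAddGroup.lift_mk]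
  exact FreeAbelianGroup.lift_apply_of _ _

lemma drel_of_gclass_eq {X Y : A} (h : gclass X = gclass Y) : drel X Y := by
  have := congrArg (toGObj A) h
  rw [toGObj_gclass, toGObj_gclass] at this
  exact gobj_eq_iff.mp this

/-- Transport a distinguished triangle along isomorphisms of its three objects. -/
lemma transport_distTriang {T : Triangle A} (hT : T ∈ distTriang A) {P M Q : A}
    (p : T.obj₁ ≅ P) (m : T.obj₂ ≅ M) (q : T.obj₃ ≅ Q) :
    Triangle.mk (p.inv ≫ T.mor₁ ≫ m.hom) (m.inv ≫ T.mor₂ ≫ q.hom)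
      (q.inv ≫ T.mor₃ ≫ p.hom⟦(1:ℤ)⟧') ∈ distTriang A := by
  refine isomorphic_distinguished _ hT _ ?_
  refine Triangle.isoMk _ _ p.symm m.symm q.symm ?_ ?_ ?_ <;> dsimp only [Triangle.mk] <;> simp

/-- If the first morphism of a distinguished triangle admits a retraction, then `mor₃ = 0`. -/
lemma mor₃_eq_zero_of_retraction {T : Triangle A} (hT : T ∈ distTriang A)
    (r : T.obj₂ ⟶ T.obj₁) (hr : T.mor₁ ≫ r = 𝟙 _) : T.mor₃ = 0 := by
  have h := comp_distTriang_mor_zero₃₁ _ hT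
  calc T.mor₃ = T.mor₃ ≫ (T.mor₁ ≫ r)⟦(1:ℤ)⟧' := by rw [hr]; simp
  _ = (T.mor₃ ≫ T.mor₁⟦(1:ℤ)⟧') ≫ r⟦(1:ℤ)⟧' := by rw [Functor.map_comp, Category.assoc]
  _ = 0 := by rw [h, zero_comp]

/-- Splitting of a distinguished triangle whose first morphism admits a retraction. -/
lemma split_of_retraction {T : Triangle A} (hT : T ∈ distTriang A)
    (r : T.obj₂ ⟶ T.obj₁) (hr : T.mor₁ ≫ r = 𝟙 _) :
    Nonempty (T.obj₂ ≅ T.obj₁ ⊞ T.obj₃) := by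
  obtain ⟨e, -⟩ := exists_iso_binaryBiproduct_of_distTriang T hT
    (mor₃_eq_zero_of_retraction hT r hr)
  exact ⟨e⟩

/-- Two distinguished triangles with the same base (`obj₁`, `obj₃`, `mor₃`) have
isomorphic middle objects. -/
lemma middle_iso_of_same_base {T T' : Triangle A} (hT : T ∈ distTriang A)
    (hT' : T' ∈ distTriang A) (h₁ : T.obj₁ = T'.obj₁) (h₃ : T.obj₃ = T'.obj₃)
    (hm : T.mor₃ = eqToHom h₃ ≫ T'.mor₃ ≫ (eqToHom h₁.symm)⟦(1:ℤ)⟧') :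
    Nonempty (T.obj₂ ≅ T'.obj₂) := by
  obtain ⟨b, hb₁, hb₂⟩ := complete_distinguished_triangle_morphism₂ T T' hT hT'
    (eqToHom h₁) (eqToHom h₃) (by rw [hm]; simp [← Functor.map_comp])
  have := isIso₂_of_isIso₁₃
    ({ hom₁ := eqToHom h₁, hom₂ := b, hom₃ := eqToHom h₃,
       comm₁ := hb₁, comm₂ := hb₂, comm₃ := by rw [hm]; simp [← Functor.map_comp] } : T ⟶ T')
    hT hT' (by dsimp; infer_instance) (by dsimp; infer_instance)
  exact ⟨asIso b⟩

end GThomason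

open GThomason in
/-- Let `φ : C ⥤ D` be a fully faithful triangulated functor such that every object of
`D` is a direct summand of an object in the image of `φ`, and assume `D` satisfies weak
cancellation. If the class `[V]` of `V : D` in the Grothendieck group lies in the image of
the induced map `G(φ)`, then `V ≅ φ W` for some `W : C`. -/
theorem essImage_of_class_in_image
    {C D : Type*} [Category C] [Preadditive C] [HasZeroObject C] [HasShift C ℤ]
    [∀ n : ℤ, (shiftFunctor C n).Additive] [Pretriangulated C]
    [Category D] [Preadditive D] [HasZeroObject D] [HasShift D ℤ]
    [∀ n : ℤ, (shiftFunctor D n).Additive] [Pretriangulated D]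
    [HasBinaryBiproducts D]
    (φ : C ⥤ D) [φ.Additive] [φ.CommShift ℤ] [φ.IsTriangulated]
    [φ.Full] [φ.Faithful]
    (hdense : ∀ Y : D, ∃ (X : C) (s : Y ⟶ φ.obj X) (r : φ.obj X ⟶ Y), s ≫ r = 𝟙 Y)
    (hwc : WeakCancellation D)
    (g : GGroup C →+ GGroup D)
    (hg : ∀ X : C, g (gclass X) = gclass (φ.obj X))
    (V : D) (hV : gclass V ∈ AddMonoidHom.range g) :
    ∃ W : C, Nonempty (φ.obj W ≅ V) := by
  -- Step 1: find `B : C` with `[φ B] = [V]` in `GGroup D`.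
  obtain ⟨x, hx⟩ := hV
  obtain ⟨B, rfl⟩ := gclass_surjective x
  rw [hg] at hx
  -- Step 2: Thomason's relation between `φ B` and `V`.
  have hrel : drel (φ.obj B) V := drel_of_gclass_eq hx
  obtain ⟨T₁, T₂, Y, d₁, d₂, ⟨e₁⟩, ⟨e₂⟩, ⟨e₃⟩, ⟨e₄⟩⟩ := hrel
  -- Step 3: complements of the two ends of `T₁`.
  obtain ⟨X₁c, s₁, r₁, hsr₁⟩ := hdense T₁.obj₁
  obtain ⟨X₂, f₂, f₃, memX⟩ := distinguished_cocone_triangle s₁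
  obtain ⟨eX⟩ := split_of_retraction memX r₁ hsr₁
  obtain ⟨Z₁c, s₂, r₂, hsr₂⟩ := hdense T₁.obj₃
  obtain ⟨Z₂, f₄, f₅, memZ⟩ := distinguished_cocone_triangle s₂
  obtain ⟨eZ⟩ := split_of_retraction memZ r₂ hsr₂
  -- `eX : φ.obj X₁c ≅ T₁.obj₁ ⊞ X₂`, `eZ : φ.obj Z₁c ≅ T₁.obj₃ ⊞ Z₂`
  set U : D := (Y ⊞ X₂) ⊞ Z₂ with hU
  -- Step 4: key construction, for each side.
  have key : ∀ (T : Triangle D), (T ∈ distTriang D) → ∀ (M : D) (eM : T.obj₂ ≅ Y ⊞ M)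
      (u₁ : T.obj₁ ≅ T₁.obj₁) (u₃ : T.obj₃ ≅ T₁.obj₃),
      ∃ E : C, Nonempty (U ⊞ M ≅ φ.obj E) := by
    intro T hT M eM u₁ u₃
    obtain ⟨S, hS, ⟨i₁⟩, ⟨i₂⟩, ⟨i₃⟩⟩ :=
      exists_sum_triangle T (contractibleTriangle X₂) hT (contractible_distinguished X₂)
    obtain ⟨S₂, hS₂, ⟨j₁⟩, ⟨j₂⟩, ⟨j₃⟩⟩ :=
      exists_sum_triangle S (Triangle.mk (0 : (0:D) ⟶ Z₂) (𝟙 Z₂) 0) hS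
        (contractible_distinguished₁ Z₂)
    -- object isos
    have p : S₂.obj₁ ≅ φ.obj X₁c :=
      j₁ ≪≫ biprod.mapIso (i₁ ≪≫ biprod.mapIso u₁ (Iso.refl _)) (Iso.refl _) ≪≫
        (isoBiprodZero (isZero_zero D)).symm ≪≫ eX.symm
    have m : S₂.obj₂ ≅ U ⊞ M :=
      j₂ ≪≫ biprod.mapIso (i₂ ≪≫ biprod.mapIso eM (Iso.refl _) ≪≫ shuffle Y M X₂)
        (Iso.refl _) ≪≫ shuffle (Y ⊞ X₂) M Z₂
    have q : S₂.obj₃ ≅ φ.obj Z₁c :=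
      j₃ ≪≫ biprod.mapIso (i₃ ≪≫ (isoBiprodZero (isZero_zero D)).symm ≪≫ u₃) (Iso.refl _) ≪≫
        eZ.symm
    have hR := transport_distTriang hS₂ p m q
    set R : Triangle D := Triangle.mk (p.inv ≫ S₂.mor₁ ≫ m.hom) (m.inv ≫ S₂.mor₂ ≫ q.hom)
      (q.inv ≫ S₂.mor₃ ≫ p.hom⟦(1:ℤ)⟧') with hRdef
    -- complete the preimage of the connecting morphism to a triangle in C
    obtain ⟨E, u, v, memC⟩ := distinguished_cocone_triangle₂
      (φ.preimage (R.mor₃ ≫ (φ.commShiftIso (1:ℤ)).inv.app X₁c))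
    have hmap := φ.map_distinguished _ memC
    obtain ⟨w⟩ := middle_iso_of_same_base hR hmap rfl rfl (by
      change R.mor₃ = 𝟙 (φ.obj Z₁c) ≫ (φ.map (φ.preimage (R.mor₃ ≫ (φ.commShiftIso (1:ℤ)).inv.app X₁c)) ≫
        (φ.commShiftIso (1:ℤ)).hom.app X₁c) ≫ (𝟙 (φ.obj X₁c))⟦(1:ℤ)⟧'
      rw [Functor.map_preimage]
      simp
      exact ((Category.assoc _ _ _).trans ((congrArg (fun t => R.mor₃ ≫ t)
        (Iso.inv_hom_id_app (φ.commShiftIso (1:ℤ)) X₁c)).trans (Category.comp_id _))).symm)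
    exact ⟨E, ⟨w⟩⟩
  obtain ⟨EA, ⟨wA⟩⟩ := key T₁ d₁ (φ.obj B) e₂ (Iso.refl _) (Iso.refl _)
  obtain ⟨EV, ⟨wV⟩⟩ := key T₂ d₂ V e₃ e₁.symm e₄.symm
  -- Step 5: `φ P ≅ φ EV ⊞ φ B`.
  obtain ⟨P, fP, gP, memP⟩ := distinguished_cocone_triangle₂ (0 : B ⟶ EV⟦(1:ℤ)⟧)
  have hPm := φ.map_distinguished _ memP
  obtain ⟨κP, -⟩ := exists_iso_binaryBiproduct_of_distTriang _ hPm (by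
    dsimp [Functor.mapTriangle, Triangle.mk]; rw [Functor.map_zero, zero_comp]; rfl)
  -- `κP : φ.obj P ≅ φ.obj EV ⊞ φ.obj B`
  have κ : φ.obj P ≅ φ.obj EA ⊞ V :=
    κP ≪≫ biprod.mapIso wV.symm (Iso.refl _) ≪≫ shuffle U V (φ.obj B) ≪≫
      biprod.mapIso wA (Iso.refl _)
  -- Step 6: split off `φ EA` inside `φ P` through `C`.
  have hj : (φ.preimage (biprod.inl ≫ κ.inv)) ≫ (φ.preimage (κ.hom ≫ biprod.fst)) = 𝟙 EA := by
    apply φ.map_injective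
    rw [φ.map_comp, φ.map_preimage, φ.map_preimage, φ.map_id]
    simp
  obtain ⟨Q, aQ, bQ, memQ⟩ := distinguished_cocone_triangle (φ.preimage (biprod.inl ≫ κ.inv))
  have hQm := φ.map_distinguished _ memQ
  obtain ⟨eQ⟩ := split_of_retraction hQm (φ.map (φ.preimage (κ.hom ≫ biprod.fst))) (by
    dsimp [Functor.mapTriangle, Triangle.mk]
    rw [← φ.map_comp, hj, φ.map_id])
  -- `eQ : φ.obj P ≅ φ.obj EA ⊞ φ.obj Q`
  obtain ⟨final⟩ := hwc (φ.obj EA) V (φ.obj Q) ⟨κ.symm ≪≫ eQ⟩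
  exact ⟨Q, ⟨final.symm⟩⟩
end

section
/- Let φ : C → D be a fully faithful triangulated functor such that every object of D is a direct summand of an object in the image of φ, and assume D satisfies weak cancellation. If the induced map G(φ) : G(C) → G(D) on Grothendieck groups is an isomorphism, then φ is an equivalence of categories. -/
open CategoryTheory Limits Pretriangulated

set_option linter.unusedSectionVars false

open ZeroObject

namespace GrothWork

/-! ### A concrete "split" Grothendieck group (group completion of iso classes) -/

section Mon

variable {E : Type*} [Category E] [Preadditive E] [HasZeroObject E] [HasBinaryBiproducts E]

/-- Setoid of isomorphism on objects. -/
def isoSetoid (E : Type*) [Category E] : Setoid E where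
  r X Y := Nonempty (X ≅ Y)
  iseqv := ⟨fun X => ⟨Iso.refl X⟩, fun ⟨e⟩ => ⟨e.symm⟩, fun ⟨e⟩ ⟨f⟩ => ⟨e ≪≫ f⟩⟩

/-- Iso classes of objects. -/
def ObjCl (E : Type*) [Category E] := Quotient (isoSetoid E)

/-- class of an object -/
def omk (X : E) : ObjCl E := Quotient.mk (isoSetoid E) X

lemma omk_eq_of_iso {X Y : E} (e : X ≅ Y) : omk X = omk Y := Quotient.sound ⟨e⟩
lemma iso_of_omk_eq {X Y : E} (h : omk X = omk Y) : Nonempty (X ≅ Y) := Quotient.exact h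
lemma omk_surjective (a : ObjCl E) : ∃ X : E, omk X = a := Quotient.exists_rep a

noncomputable instance : Add (ObjCl E) :=
  ⟨Quotient.lift₂ (fun X Y => omk (X ⊞ Y))
    (fun _ _ _ _ ⟨ea⟩ ⟨eb⟩ => omk_eq_of_iso (biprod.mapIso ea eb))⟩

lemma omk_add (X Y : E) : omk X + omk Y = omk (X ⊞ Y) := rfl

noncomputable instance : Zero (ObjCl E) := ⟨omk (0 : E)⟩

lemma omk_zero : (0 : ObjCl E) = omk (0 : E) := rfl

noncomputable instance : AddCommMonoid (ObjCl E) where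
  add_assoc a b c := Quotient.inductionOn₃ a b c
    (fun X Y Z => omk_eq_of_iso (biprod.associator X Y Z))
  zero_add a := Quotient.inductionOn a
    (fun X => omk_eq_of_iso (isoZeroBiprod (isZero_zero E)).symm)
  add_zero a := Quotient.inductionOn a
    (fun X => omk_eq_of_iso (isoBiprodZero (isZero_zero E)).symm)
  add_comm a b := Quotient.inductionOn₂ a b
    (fun X Y => omk_eq_of_iso (biprod.braiding X Y))
  nsmul := nsmulRec

variable (E) in
/-- The relation defining the group completion. -/
def kSetoid : Setoid (ObjCl E × ObjCl E) where
  r p q := ∃ k, p.1 + q.2 + k = q.1 + p.2 + k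
  iseqv := by
    constructor
    · exact fun p => ⟨0, rfl⟩
    · rintro p q ⟨k, h⟩; exact ⟨k, h.symm⟩
    · rintro p q r ⟨k, h⟩ ⟨l, h'⟩
      refine ⟨q.1 + q.2 + k + l, ?_⟩
      have e1 : p.1 + r.2 + (q.1 + q.2 + k + l) = (p.1 + q.2 + k) + (q.1 + r.2 + l) := by abel
      have e2 : r.1 + p.2 + (q.1 + q.2 + k + l) = (q.1 + p.2 + k) + (r.1 + q.2 + l) := by abel
      rw [e1, h, h', e2]

variable (E) in
/-- Group completion of the monoid of iso classes. -/
def KGrp := Quotient (kSetoid E)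

/-- mk for KGrp -/
def kmk' (p : ObjCl E × ObjCl E) : KGrp E := Quotient.mk (kSetoid E) p

noncomputable instance : Zero (KGrp E) := ⟨kmk' (0, 0)⟩
noncomputable instance : Neg (KGrp E) :=
  ⟨Quotient.lift (fun p => kmk' (p.2, p.1)) (by
    rintro p q ⟨k, h⟩
    refine Quotient.sound ⟨k, ?_⟩
    have e1 : p.2 + q.1 + k = q.1 + p.2 + k := by abel
    have e2 : q.2 + p.1 + k = p.1 + q.2 + k := by abel
    rw [e1, ← h, e2])⟩
noncomputable instance : Add (KGrp E) :=
  ⟨Quotient.lift₂ (fun p q => kmk' (p.1 + q.1, p.2 + q.2)) (by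
    rintro p q p' q' ⟨k, h⟩ ⟨l, h'⟩
    refine Quotient.sound ⟨k + l, ?_⟩
    have e1 : p.1 + q.1 + (p'.2 + q'.2) + (k + l)
        = (p.1 + p'.2 + k) + (q.1 + q'.2 + l) := by abel
    have e2 : p'.1 + q'.1 + (p.2 + q.2) + (k + l)
        = (p'.1 + p.2 + k) + (q'.1 + q.2 + l) := by abel
    rw [e1, h, h', e2])⟩

noncomputable instance : AddCommGroup (KGrp E) where
  add_assoc a b c := Quotient.inductionOn₃ a b c
    (fun p q r => Quotient.sound ⟨0, by dsimp; abel⟩)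
  zero_add a := Quotient.inductionOn a (fun p => Quotient.sound ⟨0, by dsimp; abel⟩)
  add_zero a := Quotient.inductionOn a (fun p => Quotient.sound ⟨0, by dsimp; abel⟩)
  add_comm a b := Quotient.inductionOn₂ a b (fun p q => Quotient.sound ⟨0, by dsimp; abel⟩)
  neg_add_cancel a := Quotient.inductionOn a (fun p => Quotient.sound ⟨0, by dsimp; abel⟩)
  nsmul := nsmulRec
  zsmul := zsmulRec

/-- class of an object in the group completion -/
noncomputable def kmk (X : E) : KGrp E := kmk' (omk X, 0)

lemma kmk_eq_of_iso {X Y : E} (e : X ≅ Y) : kmk X = kmk Y := by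
  unfold kmk; rw [omk_eq_of_iso e]

lemma kmk_add (X Y : E) : kmk X + kmk Y = kmk (X ⊞ Y) :=
  Quotient.sound ⟨0, by simp [omk_add]⟩

lemma kmk_zero : kmk (0 : E) = 0 := rfl

lemma exists_of_kmk_eq {X Y : E} (h : kmk X = kmk Y) :
    ∃ k : ObjCl E, omk X + k = omk Y + k := by
  obtain ⟨k, hk⟩ := Quotient.exact h
  exact ⟨k, by simpa using hk⟩

end Mon

/-! ### Pretriangulated lemmas -/

section Pre

variable {P : Type*} [Category P] [Preadditive P] [HasZeroObject P] [HasShift P ℤ]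
  [∀ n : ℤ, (shiftFunctor P n).Additive] [Pretriangulated P]

/-- product over Bool vs binary biproduct -/
noncomputable def boolBiprodIso (f : Bool → P) [HasProduct f] :
    (∏ᶜ f) ≅ f true ⊞ f false where
  hom := biprod.lift (Pi.π f true) (Pi.π f false)
  inv := Pi.lift (fun b => match b with | true => biprod.fst | false => biprod.snd)
  hom_inv_id := by
    apply limit.hom_ext
    rintro ⟨(_ | _)⟩ <;> simp
  inv_hom_id := by apply biprod.hom_ext <;> simp

/-- The direct sum of two distinguished triangles is distinguished (up to isomorphism). -/
lemma exists_sum_triangle (T₁ T₂ : Triangle P) (h₁ : T₁ ∈ distTriang P)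
    (h₂ : T₂ ∈ distTriang P) :
    ∃ T ∈ distTriang P, Nonempty (T.obj₁ ≅ T₁.obj₁ ⊞ T₂.obj₁) ∧
      Nonempty (T.obj₂ ≅ T₁.obj₂ ⊞ T₂.obj₂) ∧ Nonempty (T.obj₃ ≅ T₁.obj₃ ⊞ T₂.obj₃) := by
  let F : Bool → Triangle P := fun b => bif b then T₁ else T₂
  have hF : ∀ b, F b ∈ distTriang P := by rintro (_ | _); exacts [h₂, h₁]
  exact ⟨productTriangle F, productTriangle_distinguished F hF,
    ⟨boolBiprodIso _⟩, ⟨boolBiprodIso _⟩, ⟨boolBiprodIso _⟩⟩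

end Pre

/-! ### Lemmas about the functor φ -/

section Funct

variable {C D : Type*} [Category C] [Preadditive C] [HasZeroObject C] [HasShift C ℤ]
    [∀ n : ℤ, (shiftFunctor C n).Additive] [Pretriangulated C]
    [Category D] [Preadditive D] [HasZeroObject D] [HasShift D ℤ]
    [∀ n : ℤ, (shiftFunctor D n).Additive] [Pretriangulated D]
    (φ : C ⥤ D) [φ.Additive] [φ.CommShift ℤ] [φ.IsTriangulated]
    [φ.Full] [φ.Faithful]

/-- If the two outer objects of a distinguished triangle are in the image of `φ`,
so is the middle one. -/
lemma middle_mem (T : Triangle D) (hT : T ∈ distTriang D) (p q : C)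
    (eP : T.obj₁ ≅ φ.obj p) (eQ : T.obj₃ ≅ φ.obj q) :
    ∃ Z : C, Nonempty (T.obj₂ ≅ φ.obj Z) := by
  let α : φ.obj (q⟦(-1:ℤ)⟧) ≅ T.invRotate.obj₁ :=
    (φ.commShiftIso (-1:ℤ)).app q ≪≫ (shiftFunctor D (-1:ℤ)).mapIso eQ.symm
  let w : q⟦(-1:ℤ)⟧ ⟶ p := φ.preimage (α.hom ≫ T.invRotate.mor₁ ≫ eP.hom)
  obtain ⟨Z, u, v, hTc⟩ := distinguished_cocone_triangle w
  have hTd := φ.map_distinguished _ hTc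
  have comm : T.invRotate.mor₁ ≫ eP.hom
      = α.symm.hom ≫ (φ.mapTriangle.obj (Triangle.mk w u v)).mor₁ := by
    dsimp only [Functor.mapTriangle, Triangle.mk, Iso.symm]
    rw [Functor.map_preimage]
    simp
  have e := isoTriangleOfIso₁₂ _ _ (inv_rot_of_distTriang T hT) hTd α.symm eP comm
  exact ⟨Z, ⟨(Triangle.π₃.mapIso e : T.obj₂ ≅ φ.obj Z)⟩⟩

/-- Every object has a complement into the image of `φ`. -/
lemma exists_complement
    (hdense : ∀ Y : D, ∃ (X : C) (s : Y ⟶ φ.obj X) (r : φ.obj X ⟶ Y), s ≫ r = 𝟙 Y)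
    (Y : D) : ∃ (A : D) (X : C), Nonempty (A ⊞ Y ≅ φ.obj X) := by
  obtain ⟨X, s, r, hsr⟩ := hdense Y
  obtain ⟨Q, u, v, hT⟩ := distinguished_cocone_triangle r
  have hT' := inv_rot_of_distTriang _ hT
  have hc : (Triangle.mk r u v).invRotate.mor₂ ≫ (Triangle.mk r u v).invRotate.mor₃ = 0 :=
    comp_distTriang_mor_zero₂₃ _ hT'
  have h0 : (Triangle.mk r u v).invRotate.mor₃ = 0 := by
    have h2 : (Triangle.mk r u v).invRotate.mor₂ = r := rfl
    rw [h2] at hc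
    have h4 : s ≫ (r ≫ (Triangle.mk r u v).invRotate.mor₃) = (Triangle.mk r u v).invRotate.mor₃ :=
      (Category.assoc _ _ _).symm.trans
        ((congrArg (· ≫ (Triangle.mk r u v).invRotate.mor₃) hsr).trans (Category.id_comp _))
    exact h4.symm.trans ((congrArg (s ≫ ·) hc).trans comp_zero)
  obtain ⟨e, -, -⟩ := exists_iso_binaryBiproduct_of_distTriang _ hT' h0
  exact ⟨Q⟦(-1:ℤ)⟧, X, ⟨e.symm⟩⟩

/-- Weak cancellation allows cancelling image summands. -/
lemma cancel_summand (hwc : WeakCancellation D) (Y : D) (X' X : C)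
    (e : φ.obj X' ⊞ Y ≅ φ.obj X) : ∃ W : C, Nonempty (Y ≅ φ.obj W) := by
  let i : X' ⟶ X := φ.preimage (biprod.inl ≫ e.hom)
  let ρ : X ⟶ X' := φ.preimage (e.inv ≫ biprod.fst)
  have hiρ : i ≫ ρ = 𝟙 X' := φ.map_injective (by simp [i, ρ])
  obtain ⟨Q, u, v, hT⟩ := distinguished_cocone_triangle i
  have h1 : (Triangle.mk i u v).mor₃ ≫ i⟦(1:ℤ)⟧' = 0 := comp_distTriang_mor_zero₃₁ _ hT
  have h0 : (Triangle.mk i u v).mor₃ = 0 := by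
    have h5 : ((Triangle.mk i u v).mor₃ ≫ i⟦(1:ℤ)⟧') ≫ ρ⟦(1:ℤ)⟧' = (Triangle.mk i u v).mor₃ :=
      (Category.assoc _ _ _).trans ((congrArg
        (fun (f : X'⟦(1:ℤ)⟧ ⟶ X'⟦(1:ℤ)⟧) => (Triangle.mk i u v).mor₃ ≫ f)
        (((shiftFunctor C (1:ℤ)).map_comp i ρ).symm.trans
          ((congrArg (shiftFunctor C (1:ℤ)).map hiρ).trans (CategoryTheory.Functor.map_id _ _)))).trans
        (Category.comp_id _))
    exact h5.symm.trans ((congrArg (· ≫ ρ⟦(1:ℤ)⟧') h1).trans zero_comp)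
  obtain ⟨e2, -, -⟩ := exists_iso_binaryBiproduct_of_distTriang _ hT h0
  have hpb : PreservesBinaryBiproducts φ := by
    have : PreservesBiproductsOfShape WalkingPair φ := PreservesFiniteBiproducts.preserves
    exact preservesBinaryBiproducts_of_preservesBiproducts φ
  have := hpb.preserves (X := X') (Y := Q)
  have etot : φ.obj X' ⊞ Y ≅ φ.obj X' ⊞ φ.obj Q :=
    e ≪≫ φ.mapIso e2 ≪≫ φ.mapBiprod X' Q
  obtain ⟨ee⟩ := hwc (φ.obj X') Y (φ.obj Q) ⟨etot⟩
  exact ⟨Q, ⟨ee⟩⟩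

end Funct

end GrothWork

open GrothWork

/-- Let `φ : C ⥤ D` be a fully faithful triangulated functor such that every object of
`D` is a direct summand of an object in the image of `φ`, and assume `D` satisfies weak
cancellation. If the induced map `G(φ)` on Grothendieck groups is an isomorphism, then
`φ` is an equivalence of categories. -/
theorem equivalence_of_grothendieck_iso
    {C D : Type*} [Category C] [Preadditive C] [HasZeroObject C] [HasShift C ℤ]
    [∀ n : ℤ, (shiftFunctor C n).Additive] [Pretriangulated C]
    [Category D] [Preadditive D] [HasZeroObject D] [HasShift D ℤ]
    [∀ n : ℤ, (shiftFunctor D n).Additive] [Pretriangulated D]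
    [HasBinaryBiproducts D]
    (φ : C ⥤ D) [φ.Additive] [φ.CommShift ℤ] [φ.IsTriangulated]
    [φ.Full] [φ.Faithful]
    (hdense : ∀ Y : D, ∃ (X : C) (s : Y ⟶ φ.obj X) (r : φ.obj X ⟶ Y), s ≫ r = 𝟙 Y)
    (hwc : WeakCancellation D)
    (g : GGroup C →+ GGroup D)
    (hg : ∀ X : C, g (gclass X) = gclass (φ.obj X))
    (hbij : Function.Bijective g) :
    φ.IsEquivalence := by
  classical
  have hpb : PreservesBinaryBiproducts φ := by
    have : PreservesBiproductsOfShape WalkingPair φ := PreservesFiniteBiproducts.preserves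
    exact preservesBinaryBiproducts_of_preservesBiproducts φ
  have hφbi : ∀ A B : C, Nonempty (φ.obj (A ⊞ B) ≅ φ.obj A ⊞ φ.obj B) := by
    intro A B
    have := hpb.preserves (X := A) (Y := B)
    exact ⟨φ.mapBiprod A B⟩
  have hφadd : ∀ A B : C, kmk (φ.obj (A ⊞ B)) = kmk (φ.obj A) + kmk (φ.obj B) := by
    intro A B
    obtain ⟨e⟩ := hφbi A B
    rw [kmk_add]
    exact kmk_eq_of_iso e
  let ψ : FreeAbelianGroup D →+ KGrp D := FreeAbelianGroup.lift (fun Y => kmk Y)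
  have hψ : ∀ Y : D, ψ (FreeAbelianGroup.of Y) = kmk Y :=
    fun Y => FreeAbelianGroup.lift_apply_of (f := fun Y => kmk Y) Y
  let N : AddSubgroup (KGrp D) :=
    { carrier := {x | ∃ X₁ X₂ : C, x = kmk (φ.obj X₁) - kmk (φ.obj X₂)}
      zero_mem' := ⟨0, 0, by simp⟩
      add_mem' := by
        rintro a b ⟨A₁, A₂, rfl⟩ ⟨B₁, B₂, rfl⟩
        exact ⟨A₁ ⊞ B₁, A₂ ⊞ B₂, by rw [hφadd, hφadd]; abel⟩
      neg_mem' := by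
        rintro a ⟨A₁, A₂, rfl⟩
        exact ⟨A₂, A₁, by abel⟩ }
  have hmemN : ∀ X : C, kmk (φ.obj X) ∈ N := by
    intro X
    refine ⟨X, 0, ?_⟩
    have h0 : kmk (φ.obj (0 : C)) = 0 := by
      rw [kmk_eq_of_iso φ.mapZeroObject, kmk_zero]
    rw [h0, sub_zero]
  let χ0 : FreeAbelianGroup D →+ KGrp D ⧸ N := (QuotientAddGroup.mk' N).comp ψ
  have hχ0 : ∀ Y : D, χ0 (FreeAbelianGroup.of Y) = QuotientAddGroup.mk' N (kmk Y) := by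
    intro Y
    simp only [χ0, AddMonoidHom.coe_comp, Function.comp_apply, hψ]
  have heuler : ∀ x ∈ eulerSubgroup D, χ0 x = 0 := by
    have hle : eulerSubgroup D ≤ χ0.ker := by
      refine (AddSubgroup.closure_le _).2 ?_
      rintro x (⟨T, hT, rfl⟩ | ⟨U, V, ⟨e⟩, rfl⟩)
      · -- triangle relation
        obtain ⟨a', p, ⟨ea⟩⟩ := exists_complement φ hdense T.obj₁
        obtain ⟨c', q, ⟨ec⟩⟩ := exists_complement φ hdense T.obj₃
        obtain ⟨S, hS, ⟨s₁⟩, ⟨s₂⟩, ⟨s₃⟩⟩ :=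
          exists_sum_triangle (contractibleTriangle a')
            (Triangle.mk (0 : (0:D) ⟶ c') (𝟙 c') 0)
            (contractible_distinguished a') (contractible_distinguished₁ c')
        obtain ⟨T₀, hT₀, ⟨t₁⟩, ⟨t₂⟩, ⟨t₃⟩⟩ := exists_sum_triangle T S hT hS
        have hP : omk T₀.obj₁ = omk (φ.obj p) := by
          calc omk T₀.obj₁ = omk T.obj₁ + omk S.obj₁ := by
                rw [omk_eq_of_iso t₁, ← omk_add]
            _ = omk T.obj₁ + (omk a' + omk (0:D)) := by
                rw [omk_eq_of_iso s₁, ← omk_add]; rfl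
            _ = omk a' + omk T.obj₁ := by rw [← omk_zero]; abel
            _ = omk (φ.obj p) := by rw [omk_add, omk_eq_of_iso ea]
        have hQ : omk T₀.obj₃ = omk (φ.obj q) := by
          calc omk T₀.obj₃ = omk T.obj₃ + omk S.obj₃ := by
                rw [omk_eq_of_iso t₃, ← omk_add]
            _ = omk T.obj₃ + (omk (0:D) + omk c') := by
                rw [omk_eq_of_iso s₃, ← omk_add]; rfl
            _ = omk c' + omk T.obj₃ := by rw [← omk_zero]; abel
            _ = omk (φ.obj q) := by rw [omk_add, omk_eq_of_iso ec]
        obtain ⟨eP⟩ := iso_of_omk_eq hP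
        obtain ⟨eQ⟩ := iso_of_omk_eq hQ
        obtain ⟨Z, ⟨eM⟩⟩ := middle_mem φ T₀ hT₀ p q eP eQ
        have h2 : kmk T.obj₁ + kmk a' = kmk (φ.obj p) := by
          rw [kmk_add]; exact kmk_eq_of_iso ((biprod.braiding _ _) ≪≫ ea)
        have h3 : kmk T.obj₃ + kmk c' = kmk (φ.obj q) := by
          rw [kmk_add]; exact kmk_eq_of_iso ((biprod.braiding _ _) ≪≫ ec)
        have h1 : kmk T.obj₂ + kmk a' + kmk c' = kmk (φ.obj Z) := by
          rw [kmk_add, kmk_add]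
          exact kmk_eq_of_iso ((biprod.associator _ _ _)
            ≪≫ (biprod.mapIso (Iso.refl _) s₂.symm) ≪≫ t₂.symm ≪≫ eM)
        have hrel : kmk T.obj₂ - kmk T.obj₁ - kmk T.obj₃
            = kmk (φ.obj Z) - kmk (φ.obj (p ⊞ q)) := by
          rw [hφadd, ← h1, ← h2, ← h3]; abel
        have : χ0 (FreeAbelianGroup.of T.obj₂ - FreeAbelianGroup.of T.obj₁ -
            FreeAbelianGroup.of T.obj₃)
            = QuotientAddGroup.mk' N (kmk T.obj₂ - kmk T.obj₁ - kmk T.obj₃) := by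
          rw [map_sub, map_sub, hχ0, hχ0, hχ0, map_sub, map_sub]
        rw [SetLike.mem_coe, AddMonoidHom.mem_ker, this, hrel]
        rw [QuotientAddGroup.mk'_apply, QuotientAddGroup.eq_zero_iff]
        exact ⟨Z, p ⊞ q, rfl⟩
      · -- iso relation
        rw [SetLike.mem_coe, AddMonoidHom.mem_ker, map_sub, hχ0, hχ0,
          kmk_eq_of_iso e, sub_self]
    exact fun x hx => hle hx
  let χ : GGroup D →+ KGrp D ⧸ N := QuotientAddGroup.lift (eulerSubgroup D) χ0 heuler
  have hχg : ∀ Y : D, χ (gclass Y) = QuotientAddGroup.mk' N (kmk Y) := by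
    intro Y
    have : χ (gclass Y) = χ0 (FreeAbelianGroup.of Y) := rfl
    rw [this, hχ0]
  have hχφ : ∀ X : C, χ (gclass (φ.obj X)) = 0 := by
    intro X
    rw [hχg, QuotientAddGroup.mk'_apply, QuotientAddGroup.eq_zero_iff]
    exact hmemN X
  have hz : ∀ z : GGroup C, χ (g z) = 0 := by
    intro z
    refine QuotientAddGroup.induction_on z ?_
    intro w
    refine FreeAbelianGroup.induction_on w ?_ ?_ ?_ ?_
    · rw [show ((0 : FreeAbelianGroup C) : GGroup C) = 0 from rfl, map_zero, map_zero]
    · intro x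
      have : ((FreeAbelianGroup.of x : FreeAbelianGroup C) : GGroup C) = gclass x := rfl
      rw [this, hg, hχφ]
    · intro x hx
      have : ((-FreeAbelianGroup.of x : FreeAbelianGroup C) : GGroup C)
          = -((FreeAbelianGroup.of x : FreeAbelianGroup C) : GGroup C) := rfl
      rw [this, map_neg, map_neg, hx, neg_zero]
    · intro x y hx hy
      have : ((x + y : FreeAbelianGroup C) : GGroup C)
          = ((x : FreeAbelianGroup C) : GGroup C) + ((y : FreeAbelianGroup C) : GGroup C) := rfl
      rw [this, map_add, map_add, hx, hy, add_zero]
  have hsurj : ∀ Y : D, ∃ W : C, Nonempty (Y ≅ φ.obj W) := by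
    intro Y
    obtain ⟨z, hzY⟩ := hbij.2 (gclass Y)
    have h0 : χ (gclass Y) = 0 := by rw [← hzY]; exact hz z
    rw [hχg, QuotientAddGroup.mk'_apply, QuotientAddGroup.eq_zero_iff] at h0
    obtain ⟨X₁, X₂, hY⟩ := h0
    have h4 : kmk (Y ⊞ φ.obj X₂) = kmk (φ.obj X₁) := by
      rw [← kmk_add, hY, sub_add_cancel]
    obtain ⟨k, hk⟩ := exists_of_kmk_eq h4
    obtain ⟨E0, rfl⟩ := omk_surjective k
    obtain ⟨E', X₃, ⟨eE⟩⟩ := exists_complement φ hdense E0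
    have hE3 : omk (φ.obj X₃) = omk E' + omk E0 := by
      rw [omk_add]; exact (omk_eq_of_iso eE).symm
    have hpres : ∀ A B : C, omk (φ.obj (A ⊞ B)) = omk (φ.obj A) + omk (φ.obj B) := by
      intro A B
      obtain ⟨e⟩ := hφbi A B
      rw [omk_add]; exact omk_eq_of_iso e
    have hk' : omk Y + omk (φ.obj X₂) + omk E0 = omk (φ.obj X₁) + omk E0 := by
      rw [omk_add]; exact hk
    have key : omk (φ.obj (X₂ ⊞ X₃) ⊞ Y) = omk (φ.obj (X₁ ⊞ X₃)) := by
      calc omk (φ.obj (X₂ ⊞ X₃) ⊞ Y)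
          = omk (φ.obj (X₂ ⊞ X₃)) + omk Y := (omk_add _ _).symm
        _ = (omk (φ.obj X₂) + (omk E' + omk E0)) + omk Y := by rw [hpres, hE3]
        _ = (omk Y + omk (φ.obj X₂) + omk E0) + omk E' := by abel
        _ = (omk (φ.obj X₁) + omk E0) + omk E' := by rw [hk']
        _ = omk (φ.obj X₁) + (omk E' + omk E0) := by abel
        _ = omk (φ.obj (X₁ ⊞ X₃)) := by rw [← hE3, ← hpres]
    obtain ⟨etot⟩ := iso_of_omk_eq key
    exact cancel_summand φ hwc Y (X₂ ⊞ X₃) (X₁ ⊞ X₃) etot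
  have : φ.EssSurj := by
    constructor
    intro Y
    obtain ⟨W, ⟨e⟩⟩ := hsurj Y
    exact ⟨W, ⟨e.symm⟩⟩
  exact {}
end

section
/- Let φ : C → D be a fully faithful triangulated functor such that every object of D is a direct summand of an object in the image of φ, and assume D satisfies weak cancellation. Then for every object Y of D there exists X ∈ C with φ(X) ≅ Y ⊕ Y[1]. -/
open CategoryTheory Limits Pretriangulated

section Aux

variable {E : Type*} [Category E] [Preadditive E] [HasZeroObject E] [HasShift E ℤ]
  [∀ n : ℤ, (shiftFunctor E n).Additive] [Pretriangulated E]

lemma aux_biprod_triangle_distinguished (T₁ T₂ : Triangle E)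
    (h₁ : T₁ ∈ distTriang E) (h₂ : T₂ ∈ distTriang E) :
    Triangle.mk (biprod.map T₁.mor₁ T₂.mor₁) (biprod.map T₁.mor₂ T₂.mor₂)
      (biprod.desc (T₁.mor₃ ≫ (biprod.inl : T₁.obj₁ ⟶ T₁.obj₁ ⊞ T₂.obj₁)⟦(1:ℤ)⟧')
        (T₂.mor₃ ≫ (biprod.inr : T₂.obj₁ ⟶ T₁.obj₁ ⊞ T₂.obj₁)⟦(1:ℤ)⟧')) ∈ distTriang E := by
  let Tp : WalkingPair → Triangle E := fun j => WalkingPair.casesOn j T₁ T₂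
  have hprod := productTriangle_distinguished Tp (by rintro (_|_); exacts [h₁, h₂])
  let ψl : Triangle.mk (biprod.map T₁.mor₁ T₂.mor₁) (biprod.map T₁.mor₂ T₂.mor₂)
      (biprod.desc (T₁.mor₃ ≫ (biprod.inl : T₁.obj₁ ⟶ T₁.obj₁ ⊞ T₂.obj₁)⟦(1:ℤ)⟧')
        (T₂.mor₃ ≫ (biprod.inr : T₂.obj₁ ⟶ T₁.obj₁ ⊞ T₂.obj₁)⟦(1:ℤ)⟧')) ⟶ T₁ :=
    { hom₁ := biprod.fst
      hom₂ := biprod.fst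
      hom₃ := biprod.fst
      comm₁ := by simp [Triangle.mk]
      comm₂ := by simp [Triangle.mk]
      comm₃ := by
        dsimp [Triangle.mk]
        ext
        · simp [← Functor.map_comp]
        · simp [← Functor.map_comp] }
  let ψr : Triangle.mk (biprod.map T₁.mor₁ T₂.mor₁) (biprod.map T₁.mor₂ T₂.mor₂)
      (biprod.desc (T₁.mor₃ ≫ (biprod.inl : T₁.obj₁ ⟶ T₁.obj₁ ⊞ T₂.obj₁)⟦(1:ℤ)⟧')
        (T₂.mor₃ ≫ (biprod.inr : T₂.obj₁ ⟶ T₁.obj₁ ⊞ T₂.obj₁)⟦(1:ℤ)⟧')) ⟶ T₂ :=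
    { hom₁ := biprod.snd
      hom₂ := biprod.snd
      hom₃ := biprod.snd
      comm₁ := by simp [Triangle.mk]
      comm₂ := by simp [Triangle.mk]
      comm₃ := by
        dsimp [Triangle.mk]
        ext
        · simp [← Functor.map_comp]
        · simp [← Functor.map_comp] }
  let ψ := productTriangle.lift Tp (fun j => WalkingPair.casesOn j ψl ψr)
  have h1 : IsIso ψ.hom₁ := by
    have hψ : ψ.hom₁ = (Pi.lift (fun j => WalkingPair.casesOn (motive := fun j => T₁.obj₁ ⊞ T₂.obj₁ ⟶ (Tp j).obj₁) j biprod.fst biprod.snd)) := by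
      apply Pi.hom_ext
      rintro (_|_)
      · exact (Pi.lift_π _ _).trans (Pi.lift_π (fun j => WalkingPair.casesOn (motive := fun j => T₁.obj₁ ⊞ T₂.obj₁ ⟶ (Tp j).obj₁) j biprod.fst biprod.snd) WalkingPair.left).symm
      · exact (Pi.lift_π _ _).trans (Pi.lift_π (fun j => WalkingPair.casesOn (motive := fun j => T₁.obj₁ ⊞ T₂.obj₁ ⟶ (Tp j).obj₁) j biprod.fst biprod.snd) WalkingPair.right).symm
    show IsIso (X := T₁.obj₁ ⊞ T₂.obj₁) (Y := ∏ᶜ fun j => (Tp j).obj₁) ψ.hom₁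
    rw [hψ]
    refine ⟨biprod.lift (X := T₁.obj₁) (Y := T₂.obj₁) (Pi.π (fun j => (Tp j).obj₁) WalkingPair.left)
      (Pi.π (fun j => (Tp j).obj₁) WalkingPair.right), ?_, ?_⟩
    · dsimp only [Triangle.mk]
      ext
      all_goals simp [ψ, ψl, ψr]
    · apply Pi.hom_ext
      rintro (_|_) <;> simp [ψ, ψl, ψr, Tp]
  have h2 : IsIso ψ.hom₂ := by
    have hψ : ψ.hom₂ = (Pi.lift (fun j => WalkingPair.casesOn (motive := fun j => T₁.obj₂ ⊞ T₂.obj₂ ⟶ (Tp j).obj₂) j biprod.fst biprod.snd)) := by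
      apply Pi.hom_ext
      rintro (_|_)
      · exact (Pi.lift_π _ _).trans (Pi.lift_π (fun j => WalkingPair.casesOn (motive := fun j => T₁.obj₂ ⊞ T₂.obj₂ ⟶ (Tp j).obj₂) j biprod.fst biprod.snd) WalkingPair.left).symm
      · exact (Pi.lift_π _ _).trans (Pi.lift_π (fun j => WalkingPair.casesOn (motive := fun j => T₁.obj₂ ⊞ T₂.obj₂ ⟶ (Tp j).obj₂) j biprod.fst biprod.snd) WalkingPair.right).symm
    show IsIso (X := T₁.obj₂ ⊞ T₂.obj₂) (Y := ∏ᶜ fun j => (Tp j).obj₂) ψ.hom₂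
    rw [hψ]
    refine ⟨biprod.lift (X := T₁.obj₂) (Y := T₂.obj₂) (Pi.π (fun j => (Tp j).obj₂) WalkingPair.left)
      (Pi.π (fun j => (Tp j).obj₂) WalkingPair.right), ?_, ?_⟩
    · dsimp only [Triangle.mk]
      ext
      all_goals simp [ψ, ψl, ψr]
    · apply Pi.hom_ext
      rintro (_|_) <;> simp [ψ, ψl, ψr, Tp]
  have h3 : IsIso ψ.hom₃ := by
    have hψ : ψ.hom₃ = (Pi.lift (fun j => WalkingPair.casesOn (motive := fun j => T₁.obj₃ ⊞ T₂.obj₃ ⟶ (Tp j).obj₃) j biprod.fst biprod.snd)) := by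
      apply Pi.hom_ext
      rintro (_|_)
      · exact (Pi.lift_π _ _).trans (Pi.lift_π (fun j => WalkingPair.casesOn (motive := fun j => T₁.obj₃ ⊞ T₂.obj₃ ⟶ (Tp j).obj₃) j biprod.fst biprod.snd) WalkingPair.left).symm
      · exact (Pi.lift_π _ _).trans (Pi.lift_π (fun j => WalkingPair.casesOn (motive := fun j => T₁.obj₃ ⊞ T₂.obj₃ ⟶ (Tp j).obj₃) j biprod.fst biprod.snd) WalkingPair.right).symm
    show IsIso (X := T₁.obj₃ ⊞ T₂.obj₃) (Y := ∏ᶜ fun j => (Tp j).obj₃) ψ.hom₃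
    rw [hψ]
    refine ⟨biprod.lift (X := T₁.obj₃) (Y := T₂.obj₃) (Pi.π (fun j => (Tp j).obj₃) WalkingPair.left)
      (Pi.π (fun j => (Tp j).obj₃) WalkingPair.right), ?_, ?_⟩
    · dsimp only [Triangle.mk]
      ext
      all_goals simp [ψ, ψl, ψr]
    · apply Pi.hom_ext
      rintro (_|_) <;> simp [ψ, ψl, ψr, Tp]
  have : IsIso ψ := Triangle.isIso_of_isIsos ψ h1 h2 h3
  exact isomorphic_distinguished _ hprod _ (asIso ψ)

end Aux

/-- Let `φ : C ⥤ D` be a fully faithful triangulated functor such that every object of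
`D` is a direct summand of an object in the image of `φ`, and assume `D` satisfies weak
cancellation. Then for every `Y : D` there is `X : C` with `φ X ≅ Y ⊞ Y⟦1⟧`. -/
theorem exists_preimage_of_sum_with_shift
    {C D : Type*} [Category C] [Preadditive C] [HasZeroObject C] [HasShift C ℤ]
    [∀ n : ℤ, (shiftFunctor C n).Additive] [Pretriangulated C]
    [Category D] [Preadditive D] [HasZeroObject D] [HasShift D ℤ]
    [∀ n : ℤ, (shiftFunctor D n).Additive] [Pretriangulated D]
    [HasBinaryBiproducts D]
    (φ : C ⥤ D) [φ.Additive] [φ.CommShift ℤ] [φ.IsTriangulated]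
    [φ.Full] [φ.Faithful]
    (hdense : ∀ Y : D, ∃ (X : C) (s : Y ⟶ φ.obj X) (r : φ.obj X ⟶ Y), s ≫ r = 𝟙 Y)
    (hwc : WeakCancellation D)
    (Y : D) :
    ∃ X : C, Nonempty (φ.obj X ≅ Y ⊞ (Y⟦(1 : ℤ)⟧)) := by
  obtain ⟨X, s, r, hsr⟩ := hdense Y
  -- complete the split mono `s` to a distinguished triangle and split it
  obtain ⟨Z, p, w, hT⟩ := distinguished_cocone_triangle s
  have hmono : Mono s := ⟨fun f g h => by
    have := h =≫ r
    simpa [hsr] using this⟩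
  have hw : (Triangle.mk s p w).mor₃ = 0 :=
    Triangle.mor₃_eq_zero_of_mono₁ _ hT hmono
  obtain ⟨e, he₁, he₂⟩ := exists_iso_binaryBiproduct_of_distTriang _ hT hw
  replace e : φ.obj X ≅ Y ⊞ Z := e
  -- e : φ.obj X ≅ Y ⊞ Z
  -- the idempotent projecting onto Z comes from C
  set m : φ.obj X ⟶ φ.obj X := e.hom ≫ biprod.snd ≫ biprod.inr ≫ e.inv with hm
  obtain ⟨X'', a, b, hTg⟩ := distinguished_cocone_triangle (φ.preimage m)
  have hD := φ.map_distinguished _ hTg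
  -- the cone of `0 : Y ⟶ Y` is `Y ⊞ Y⟦1⟧`
  obtain ⟨Q, u, v, hTY⟩ := distinguished_cocone_triangle (0 : Y ⟶ Y)
  have hrot := rot_of_distTriang _ hTY
  have hrotzero : (Triangle.mk (0 : Y ⟶ Y) u v).rotate.mor₃ = 0 := by
    show -((shiftFunctor D (1:ℤ)).map (0 : Y ⟶ Y)) = 0
    simp
  obtain ⟨eQ, -, -⟩ := exists_iso_binaryBiproduct_of_distTriang _ hrot hrotzero
  -- eQ : Q ≅ Y ⊞ Y⟦1⟧
  -- the biproduct of the triangle over `0 : Y ⟶ Y` and the contractible triangle on Z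
  have hTc := aux_biprod_triangle_distinguished (Triangle.mk (0 : Y ⟶ Y) u v)
    (contractibleTriangle Z) hTY (contractible_distinguished Z)
  -- compare with the image triangle
  have it := isoTriangleOfIso₁₂ _ _ hD hTc e e (by
    show φ.map (φ.preimage m) ≫ e.hom = e.hom ≫ biprod.map (0 : Y ⟶ Y) (𝟙 Z)
    rw [Functor.map_preimage, hm]
    simp only [Category.assoc, Iso.inv_hom_id, Category.comp_id]
    ext
    · simp
    · simp)
  have i3 : φ.obj X'' ≅ Q ⊞ (contractibleTriangle Z).obj₃ := Triangle.π₃.mapIso it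
  have hz : IsZero ((contractibleTriangle Z).obj₃) := isZero_zero D
  have izero : Q ⊞ (contractibleTriangle Z).obj₃ ≅ Q := by
    refine ⟨biprod.fst, biprod.inl, ?_, by simp⟩
    ext
    all_goals first | apply hz.eq_of_tgt | apply hz.eq_of_src | simp
  exact ⟨X'', ⟨i3 ≪≫ izero ≪≫ eQ⟩⟩
end
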